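/- There exists an absolute constant c > 0 such that for every integer k ≥ 2 the following holds. Set λ = √(log k / 3). Let J be a random variable uniformly distributed on {1, …, k}, and conditionally on J = i let Z be distributed according to N(λ e_i, I_k), the Gaussian measure on ℝ^k with mean λ e_i and identity covariance. Then for every measurable function Ψ : ℝ^k → {1, …, k}, P(Ψ(Z) ≠ J) ≥ c. -/

import Mathlib

set_option maxHeartbeats 1000000

open MeasureTheory ProbabilityTheory
open scoped ENNReal

/-- The standard Gaussian measure on `ℝ^k` (product of standard one-dimensional Gaussians). -/
noncomputable def stdGaussianPi (k : ℕ) : Measure (Fin k → ℝ) :=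
  Measure.pi fun _ => gaussianReal 0 1

/-- `N(m, I_k)`: the Gaussian measure on `ℝ^k` with mean `m` and identity covariance,
i.e. the pushforward of the standard Gaussian under translation by `m`. -/
noncomputable def gaussianPi (k : ℕ) (m : Fin k → ℝ) : Measure (Fin k → ℝ) :=
  (stdGaussianPi k).map (fun z => z + m)

/-- The `i`-th standard basis vector of `ℝ^k`, scaled by `lam`. -/
noncomputable def scaledBasis (k : ℕ) (lam : ℝ) (i : Fin k) : Fin k → ℝ :=
  fun j => if j = i then lam else 0

/-- The joint law of `(J, Z)` where `J` is uniform on `{1,…,k}` and, given `J = i`,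
`Z ∼ N(λ e_i, I_k)`. -/
noncomputable def jointLaw (k : ℕ) (lam : ℝ) : Measure (Fin k × (Fin k → ℝ)) :=
  (k : ℝ≥0∞)⁻¹ • ∑ i : Fin k,
    (Measure.dirac i).prod (gaussianPi k (scaledBasis k lam i))

namespace Stmt9

open Real

noncomputable def dens (c x : ℝ) : ℝ≥0∞ := ENNReal.ofReal (Real.exp (c * x - c ^ 2 / 2))

lemma measurable_dens (c : ℝ) : Measurable (dens c) := by
  unfold dens; fun_prop

lemma gaussian_shift (c : ℝ) :
    gaussianReal c 1 = (gaussianReal 0 1).withDensity (dens c) := by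
  rw [gaussianReal_of_var_ne_zero _ one_ne_zero, gaussianReal_of_var_ne_zero _ one_ne_zero,
    ← withDensity_mul _ (measurable_gaussianPDF 0 1) (measurable_dens c)]
  congr 1
  funext x
  simp only [Pi.mul_apply, gaussianPDF, dens]
  rw [← ENNReal.ofReal_mul (le_of_lt (gaussianPDFReal_pos _ _ _ one_ne_zero))]
  congr 1
  simp only [gaussianPDFReal, NNReal.coe_one, mul_one, sub_zero]
  rw [mul_assoc, ← Real.exp_add]
  congr 1
  ring

lemma lintegral_dens (c : ℝ) : ∫⁻ x, dens c x ∂(gaussianReal 0 1) = 1 := by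
  have h : (gaussianReal 0 1).withDensity (dens c) Set.univ = 1 := by
    rw [← gaussian_shift]; exact measure_univ
  rwa [withDensity_apply _ MeasurableSet.univ, setLIntegral_univ] at h

lemma dens_sq (c x : ℝ) :
    dens c x ^ 2 = ENNReal.ofReal (Real.exp (c ^ 2)) * dens (2 * c) x := by
  simp only [dens, sq, ← ENNReal.ofReal_mul (Real.exp_nonneg _), ← Real.exp_add]
  congr 1
  ring

lemma lintegral_dens_sq (c : ℝ) :
    ∫⁻ x, dens c x ^ 2 ∂(gaussianReal 0 1) = ENNReal.ofReal (Real.exp (c ^ 2)) := by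
  simp_rw [dens_sq]
  rw [lintegral_const_mul _ (measurable_dens _), lintegral_dens, mul_one]

lemma gaussianPi_pi (k : ℕ) (m : Fin k → ℝ) :
    gaussianPi k m = Measure.pi (fun j => gaussianReal (m j) 1) := by
  have h := measurePreserving_pi (fun _ : Fin k => gaussianReal 0 1)
    (fun j => gaussianReal (m j) 1) (f := fun j x => x + m j)
    (fun j => ⟨measurable_add_const _, by simpa using gaussianReal_map_add_const (μ := 0) (v := 1) (m j)⟩)
  exact h.map_eq

lemma lintegral_eval {k : ℕ} (i : Fin k) {h : ℝ → ℝ≥0∞} (hh : Measurable h) :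
    ∫⁻ z, h (z i) ∂(stdGaussianPi k) = ∫⁻ x, h x ∂(gaussianReal 0 1) := by
  obtain ⟨n, rfl⟩ : ∃ n, k = n + 1 := ⟨k - 1, by have := i.pos; omega⟩
  set e := MeasurableEquiv.piFinSuccAbove (fun _ : Fin (n+1) => ℝ) i with he
  have hmp0 := measurePreserving_piFinSuccAbove (fun _ : Fin (n+1) => gaussianReal 0 1) i
  set m := Measure.pi (fun _ : Fin n => gaussianReal 0 1) with hm
  calc ∫⁻ z, h (z i) ∂(stdGaussianPi (n+1))
      = ∫⁻ p, h p.1 ∂((gaussianReal 0 1).prod m) := by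
        rw [← hmp0.lintegral_comp (f := fun p => h p.1) (hh.comp measurable_fst)]
        exact lintegral_congr fun z => rfl
    _ = ∫⁻ x, ∫⁻ _, h x ∂m ∂(gaussianReal 0 1) :=
        MeasureTheory.lintegral_prod _ ((hh.comp measurable_fst).aemeasurable)
    _ = ∫⁻ x, h x ∂(gaussianReal 0 1) := by simp

lemma gaussianPi_scaledBasis_apply {k : ℕ} (lam : ℝ) (i : Fin k)
    {A : Set (Fin k → ℝ)} (hA : MeasurableSet A) :
    gaussianPi k (scaledBasis k lam i) A
      = ∫⁻ z, A.indicator 1 z * dens lam (z i) ∂(stdGaussianPi k) := by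
  obtain ⟨n, rfl⟩ : ∃ n, k = n + 1 := ⟨k - 1, by have := i.pos; omega⟩
  set e := MeasurableEquiv.piFinSuccAbove (fun _ : Fin (n+1) => ℝ) i with he
  have hmp0 := measurePreserving_piFinSuccAbove (fun _ : Fin (n+1) => gaussianReal 0 1) i
  have hmpν := measurePreserving_piFinSuccAbove
      (fun j => gaussianReal (scaledBasis (n+1) lam i j) 1) i
  set m := Measure.pi (fun _ : Fin n => gaussianReal 0 1) with hm
  have h1 : gaussianReal (scaledBasis (n+1) lam i i) 1 = gaussianReal lam 1 := by
    simp [scaledBasis]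
  have h2 : (Measure.pi fun j : Fin n =>
      gaussianReal (scaledBasis (n+1) lam i (i.succAbove j)) 1) = m := by
    rw [hm]; congr 1; funext j; rw [show scaledBasis (n+1) lam i (i.succAbove j) = 0 from
      if_neg (Fin.succAbove_ne i j)]
  rw [h1, h2] at hmpν
  set B := e.symm ⁻¹' A with hBdef
  have hB : MeasurableSet B := e.symm.measurable hA
  have hAB : e ⁻¹' B = A := by ext z; simp [hBdef]
  have step1 : gaussianPi (n+1) (scaledBasis (n+1) lam i) A
      = ((gaussianReal lam 1).prod m) B := by
    rw [gaussianPi_pi, ← hAB]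
    exact hmpν.measure_preimage hB.nullMeasurableSet
  have hmeasB : Measurable fun x => m (Prod.mk x ⁻¹' B) :=
    measurable_measure_prodMk_left hB
  have step2 : ((gaussianReal lam 1).prod m) B
      = ∫⁻ x, dens lam x * m (Prod.mk x ⁻¹' B) ∂(gaussianReal 0 1) := by
    rw [Measure.prod_apply hB, gaussian_shift,
      lintegral_withDensity_eq_lintegral_mul _ (measurable_dens lam) hmeasB]
    rfl
  have step3 : ∀ x : ℝ, dens lam x * m (Prod.mk x ⁻¹' B)
      = ∫⁻ y, B.indicator 1 (x, y) * dens lam x ∂m := by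
    intro x
    rw [← lintegral_indicator_one (measurable_prodMk_left hB),
      ← lintegral_const_mul _ (measurable_one.indicator (measurable_prodMk_left hB))]
    refine lintegral_congr fun y => ?_
    by_cases hxy : (x, y) ∈ B <;> simp [hxy, Set.indicator, mul_comm]
  have hFmeas : Measurable fun p : ℝ × (Fin n → ℝ) => B.indicator 1 p * dens lam p.1 :=
    (measurable_one.indicator hB).mul ((measurable_dens lam).comp measurable_fst)
  have step4 : ∫⁻ x, ∫⁻ y, B.indicator 1 (x, y) * dens lam x ∂m ∂(gaussianReal 0 1)
      = ∫⁻ p, B.indicator 1 p * dens lam p.1 ∂((gaussianReal 0 1).prod m) :=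
    (MeasureTheory.lintegral_prod _ hFmeas.aemeasurable).symm
  have step5 : ∫⁻ p, B.indicator 1 p * dens lam p.1 ∂((gaussianReal 0 1).prod m)
      = ∫⁻ z, A.indicator 1 z * dens lam (z i) ∂(stdGaussianPi (n+1)) := by
    rw [← hmp0.lintegral_comp (f := fun p => B.indicator 1 p * dens lam p.1) hFmeas]
    refine lintegral_congr fun z => ?_
    have hz1 : (e z).1 = z i := rfl
    by_cases hz : z ∈ A
    · have hzB : e z ∈ B := by simp [hBdef, hz]
      rw [← he]
      simp only [Set.indicator_of_mem hzB, Set.indicator_of_mem hz, hz1, Pi.one_apply]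
    · have hzB : e z ∉ B := by simp [hBdef, hz]
      rw [← he]
      simp only [Set.indicator_of_notMem hzB, Set.indicator_of_notMem hz, zero_mul]
  rw [step1, step2]
  simp_rw [step3]
  rw [step4, step5]

lemma isProb (k : ℕ) (m : Fin k → ℝ) : IsProbabilityMeasure (gaussianPi k m) := by
  rw [gaussianPi_pi]; infer_instance

lemma isProbStd (k : ℕ) : IsProbabilityMeasure (stdGaussianPi k) := by
  unfold stdGaussianPi; infer_instance

lemma sum_indicator_apply {k : ℕ} (Ψ : (Fin k → ℝ) → Fin k) (f : ℝ → ℝ≥0∞) (z : Fin k → ℝ) :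
    ∑ i : Fin k, (Ψ ⁻¹' {i}).indicator 1 z * f (z i) = f (z (Ψ z)) := by
  rw [Finset.sum_eq_single (Ψ z)]
  · rw [Set.indicator_of_mem (by simp), Pi.one_apply, one_mul]
  · intro i _ hne
    rw [Set.indicator_of_notMem (by simp [hne.symm]), zero_mul]
  · simp

lemma sum_bound {k : ℕ} (lam : ℝ) (Ψ : (Fin k → ℝ) → Fin k) (hΨ : Measurable Ψ) :
    ∑ i : Fin k, gaussianPi k (scaledBasis k lam i) (Ψ ⁻¹' {i})
      ≤ ((k : ℝ≥0∞) * ENNReal.ofReal (Real.exp (lam ^ 2))) ^ ((1:ℝ)/2) := by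
  haveI := isProbStd k
  have hAi : ∀ i : Fin k, MeasurableSet (Ψ ⁻¹' {i}) := fun i => hΨ (measurableSet_singleton i)
  set g : (Fin k → ℝ) → ℝ≥0∞ := fun z => ∑ i, (Ψ ⁻¹' {i}).indicator 1 z * dens lam (z i)
    with hg
  have hterm : ∀ i : Fin k, Measurable fun z : Fin k → ℝ =>
      (Ψ ⁻¹' {i}).indicator 1 z * dens lam (z i) := fun i =>
    (measurable_one.indicator (hAi i)).mul ((measurable_dens lam).comp (measurable_pi_apply i))
  have hgmeas : Measurable g := Finset.measurable_sum _ fun i _ => hterm i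
  have hsum : ∑ i : Fin k, gaussianPi k (scaledBasis k lam i) (Ψ ⁻¹' {i})
      = ∫⁻ z, g z ∂(stdGaussianPi k) := by
    calc ∑ i : Fin k, gaussianPi k (scaledBasis k lam i) (Ψ ⁻¹' {i})
        = ∑ i : Fin k, ∫⁻ z, (Ψ ⁻¹' {i}).indicator 1 z * dens lam (z i) ∂(stdGaussianPi k) :=
          Finset.sum_congr rfl fun i _ => gaussianPi_scaledBasis_apply lam i (hAi i)
      _ = ∫⁻ z, g z ∂(stdGaussianPi k) := (lintegral_finset_sum _ fun i _ => hterm i).symm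
  have hpq : Real.HolderConjugate 2 2 := (Real.holderConjugate_iff_eq_conjExponent one_lt_two).2 (by norm_num)
  have hCS := ENNReal.lintegral_mul_le_Lp_mul_Lq (stdGaussianPi k) hpq hgmeas.aemeasurable
    (aemeasurable_const (b := (1:ℝ≥0∞)))
  simp only [Pi.mul_apply, mul_one, ENNReal.one_rpow, lintegral_one, measure_univ] at hCS
  -- bound ∫ g^2
  have hg2 : ∀ z, g z ^ (2:ℝ) = ∑ i : Fin k, (Ψ ⁻¹' {i}).indicator 1 z * dens lam (z i) ^ 2 := by
    intro z
    simp only [hg]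
    rw [sum_indicator_apply Ψ (fun x => dens lam x) z,
      sum_indicator_apply Ψ (fun x => dens lam x ^ 2) z]
    rw [show (2:ℝ) = ((2:ℕ):ℝ) by norm_num, ENNReal.rpow_natCast]
  have hint2 : ∫⁻ z, g z ^ (2:ℝ) ∂(stdGaussianPi k)
      ≤ (k : ℝ≥0∞) * ENNReal.ofReal (Real.exp (lam ^ 2)) := by
    calc ∫⁻ z, g z ^ (2:ℝ) ∂(stdGaussianPi k)
        = ∑ i : Fin k, ∫⁻ z, (Ψ ⁻¹' {i}).indicator 1 z * dens lam (z i) ^ 2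
            ∂(stdGaussianPi k) := by
          simp_rw [hg2]
          exact lintegral_finset_sum _ fun i _ =>
            (measurable_one.indicator (hAi i)).mul
              (((measurable_dens lam).comp (measurable_pi_apply i)).pow_const 2)
      _ ≤ ∑ i : Fin k, ∫⁻ z, dens lam (z i) ^ 2 ∂(stdGaussianPi k) := by
          refine Finset.sum_le_sum fun i _ => lintegral_mono fun z => ?_
          by_cases hz : z ∈ Ψ ⁻¹' {i} <;>
            simp [Set.indicator_of_mem, Set.indicator_of_notMem, hz]
      _ = (k : ℝ≥0∞) * ENNReal.ofReal (Real.exp (lam ^ 2)) := by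
          have : ∀ i : Fin k, ∫⁻ z, dens lam (z i) ^ 2 ∂(stdGaussianPi k)
              = ENNReal.ofReal (Real.exp (lam ^ 2)) := fun i => by
            rw [lintegral_eval i ((measurable_dens lam).pow_const 2), lintegral_dens_sq]
          simp [this, Finset.sum_const, mul_comm]
  calc ∑ i : Fin k, gaussianPi k (scaledBasis k lam i) (Ψ ⁻¹' {i})
      = ∫⁻ z, g z ∂(stdGaussianPi k) := hsum
    _ ≤ (∫⁻ z, g z ^ (2:ℝ) ∂(stdGaussianPi k)) ^ ((1:ℝ)/2) := hCS
    _ ≤ ((k : ℝ≥0∞) * ENNReal.ofReal (Real.exp (lam ^ 2))) ^ ((1:ℝ)/2) :=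
        ENNReal.rpow_le_rpow hint2 (by norm_num)

end Stmt9

open Stmt9 in
/-- Lower bound for Gaussian hypothesis testing: with `λ = √(log k / 3)`, every
(measurable) estimator `Ψ` of the component index fails with probability at least
an absolute constant `c > 0`. -/
theorem stmt_9 :
    ∃ c : ℝ, 0 < c ∧ ∀ k : ℕ, 2 ≤ k →
      ∀ Ψ : (Fin k → ℝ) → Fin k, Measurable Ψ →
        ENNReal.ofReal c
          ≤ jointLaw k (Real.sqrt (Real.log k / 3)) {p | Ψ p.2 ≠ p.1} := by
  have hc1 : (2:ℝ) ^ (-(1/3) : ℝ) < 1 :=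
    Real.rpow_lt_one_of_one_lt_of_neg one_lt_two (by norm_num)
  refine ⟨1 - (2:ℝ) ^ (-(1/3) : ℝ), by linarith, ?_⟩
  intro k hk Ψ hΨ
  set cv : ℝ := 1 - (2:ℝ) ^ (-(1/3) : ℝ) with hcv
  have hkR : (2:ℝ) ≤ (k:ℝ) := by exact_mod_cast hk
  have hkpos : (0:ℝ) < k := by linarith
  have hk0 : (k : ℝ≥0∞) ≠ 0 := by simp; omega
  have hktop : (k : ℝ≥0∞) ≠ ⊤ := ENNReal.natCast_ne_top k
  set lam : ℝ := Real.sqrt (Real.log k / 3) with hlam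
  have hAi : ∀ i : Fin k, MeasurableSet (Ψ ⁻¹' {i}) := fun i =>
    hΨ (measurableSet_singleton i)
  haveI : ∀ i : Fin k, IsProbabilityMeasure (gaussianPi k (scaledBasis k lam i)) :=
    fun i => isProb k _
  set E : Set (Fin k × (Fin k → ℝ)) := {p | Ψ p.2 ≠ p.1} with hE
  have hEeq : E = (⋃ i : Fin k, {i} ×ˢ (Ψ ⁻¹' {i}))ᶜ := by
    ext ⟨a, z⟩
    simp only [hE, Set.mem_setOf_eq, Set.mem_compl_iff, Set.mem_iUnion, Set.mem_prod,
      Set.mem_singleton_iff, Set.mem_preimage, not_exists, not_and, ne_eq]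
    constructor
    · intro h i hi
      subst hi; exact h
    · intro h
      exact h a rfl
  have hEmeas : MeasurableSet E := by
    rw [hEeq]
    exact (MeasurableSet.iUnion fun i => (measurableSet_singleton i).prod (hAi i)).compl
  have hjoint : jointLaw k lam E = (k : ℝ≥0∞)⁻¹ *
      ∑ i : Fin k, (1 - gaussianPi k (scaledBasis k lam i) (Ψ ⁻¹' {i})) := by
    rw [jointLaw, Measure.smul_apply, smul_eq_mul, Measure.finset_sum_apply]
    congr 1
    refine Finset.sum_congr rfl fun i _ => ?_
    rw [Measure.dirac_prod, Measure.map_apply measurable_prodMk_left hEmeas]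
    have hpre : Prod.mk i ⁻¹' E = (Ψ ⁻¹' {i})ᶜ := by
      ext z; simp [hE, eq_comm]
    rw [hpre, prob_compl_eq_one_sub (hAi i)]
  rw [hjoint]
  -- the sum bound
  have hlog : (0:ℝ) ≤ Real.log k := Real.log_nonneg (by linarith)
  have hlam2 : lam ^ 2 = Real.log k / 3 := Real.sq_sqrt (by positivity)
  have hexp : ENNReal.ofReal (Real.exp (lam ^ 2)) = (k : ℝ≥0∞) ^ ((1:ℝ)/3) := by
    rw [hlam2]
    have h1 : Real.exp (Real.log k / 3) = (k:ℝ) ^ ((1:ℝ)/3) := by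
      rw [Real.rpow_def_of_pos hkpos]; ring_nf
    rw [h1, ← ENNReal.ofReal_rpow_of_pos hkpos, ENNReal.ofReal_natCast]
  have hS : ∑ i : Fin k, gaussianPi k (scaledBasis k lam i) (Ψ ⁻¹' {i})
      ≤ (k : ℝ≥0∞) ^ ((2:ℝ)/3) := by
    refine (sum_bound lam Ψ hΨ).trans ?_
    rw [hexp, show (k:ℝ≥0∞) * (k:ℝ≥0∞) ^ ((1:ℝ)/3) = (k:ℝ≥0∞) ^ ((4:ℝ)/3) by
      rw [show (4:ℝ)/3 = 1 + 1/3 by norm_num, ENNReal.rpow_add 1 (1/3) hk0 hktop,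
        ENNReal.rpow_one]]
    rw [← ENNReal.rpow_mul]
    norm_num
  have hk23 : (k:ℝ≥0∞) ^ ((2:ℝ)/3) ≤ (k:ℝ≥0∞) := by
    conv_rhs => rw [← ENNReal.rpow_one (k:ℝ≥0∞)]
    exact ENNReal.rpow_le_rpow_of_exponent_le (by exact_mod_cast Nat.one_le_cast.mpr (by omega))
      (by norm_num)
  -- real arithmetic
  have hreal : (k:ℝ) * cv + (k:ℝ) ^ ((2:ℝ)/3) ≤ (k:ℝ) := by
    have h1 : (k:ℝ) ^ ((2:ℝ)/3) * (k:ℝ) ^ ((1:ℝ)/3) = (k:ℝ) := by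
      rw [← Real.rpow_add hkpos]; norm_num
    have h2 : (2:ℝ) ^ ((1:ℝ)/3) ≤ (k:ℝ) ^ ((1:ℝ)/3) :=
      Real.rpow_le_rpow (by norm_num) hkR (by norm_num)
    have h3 : (2:ℝ) ^ ((1:ℝ)/3) * (2:ℝ) ^ (-(1/3):ℝ) = 1 := by
      rw [← Real.rpow_add two_pos]; norm_num
    have h4 : (0:ℝ) < (2:ℝ) ^ (-(1/3):ℝ) := Real.rpow_pos_of_pos two_pos _
    have h5 : (0:ℝ) ≤ (k:ℝ) ^ ((2:ℝ)/3) := Real.rpow_nonneg (by positivity) _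
    have h6 : (k:ℝ) ^ ((2:ℝ)/3) ≤ (k:ℝ) * (2:ℝ) ^ (-(1/3):ℝ) := by
      calc (k:ℝ) ^ ((2:ℝ)/3)
          = (k:ℝ) ^ ((2:ℝ)/3) * ((2:ℝ) ^ ((1:ℝ)/3) * (2:ℝ) ^ (-(1/3):ℝ)) := by
            rw [h3, mul_one]
        _ ≤ (k:ℝ) ^ ((2:ℝ)/3) * ((k:ℝ) ^ ((1:ℝ)/3) * (2:ℝ) ^ (-(1/3):ℝ)) :=
            mul_le_mul_of_nonneg_left (mul_le_mul_of_nonneg_right h2 h4.le) h5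
        _ = (k:ℝ) * (2:ℝ) ^ (-(1/3):ℝ) := by rw [← mul_assoc, h1]
    have h7 : (k:ℝ) * cv = k - k * (2:ℝ) ^ (-(1/3):ℝ) := by rw [hcv]; ring
    linarith
  have hcv0 : (0:ℝ) ≤ cv := by rw [hcv]; linarith
  have hmain : (k:ℝ≥0∞) * ENNReal.ofReal cv + (k:ℝ≥0∞) ^ ((2:ℝ)/3) ≤ (k:ℝ≥0∞) := by
    have e1 : (k:ℝ≥0∞) = ENNReal.ofReal (k:ℝ) := (ENNReal.ofReal_natCast k).symm
    rw [show (k:ℝ≥0∞) ^ ((2:ℝ)/3) = ENNReal.ofReal ((k:ℝ) ^ ((2:ℝ)/3)) by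
        rw [e1, ENNReal.ofReal_rpow_of_pos hkpos]]
    conv_lhs => rw [e1]
    conv_rhs => rw [e1]
    rw [← ENNReal.ofReal_mul hkpos.le, ← ENNReal.ofReal_add (by positivity)
      (Real.rpow_nonneg hkpos.le _)]
    exact ENNReal.ofReal_le_ofReal hreal
  -- put together
  set a : Fin k → ℝ≥0∞ := fun i => gaussianPi k (scaledBasis k lam i) (Ψ ⁻¹' {i}) with ha
  suffices h : (k:ℝ≥0∞) * ENNReal.ofReal cv ≤ ∑ i : Fin k, (1 - a i) by
    calc ENNReal.ofReal cv
        = (k:ℝ≥0∞)⁻¹ * ((k:ℝ≥0∞) * ENNReal.ofReal cv) := by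
          rw [← mul_assoc, ENNReal.inv_mul_cancel hk0 hktop, one_mul]
      _ ≤ (k:ℝ≥0∞)⁻¹ * ∑ i : Fin k, (1 - a i) := mul_le_mul_right h _
  have hcover : ∑ i : Fin k, ((1 - a i) + a i) = (k:ℝ≥0∞) := by
    have h1 : ∀ i : Fin k, (1 - a i) + a i = 1 := fun i =>
      tsub_add_cancel_of_le prob_le_one
    simp [h1]
  have hge : (k:ℝ≥0∞) - ∑ i : Fin k, a i ≤ ∑ i : Fin k, (1 - a i) := by
    rw [tsub_le_iff_right, ← Finset.sum_add_distrib, hcover]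
  refine le_trans ?_ hge
  refine le_trans ?_ (tsub_le_tsub_left hS _)
  exact ENNReal.le_sub_of_add_le_right
    (by exact ENNReal.rpow_ne_top_of_nonneg (by norm_num) hktop) hmain
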